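/- Let k ≥ 2 and s ≥ 3 be integers and let N = max(k+7, s). Then for every function χ from the subsets of [N] to {1,…,k} there exist 2s pairwise distinct subsets A_1,…,A_s, B_1,…,B_s of [N], all with the same χ-value, such that A_i ⊆ B_i for each i. (That is, R_k(𝓑 | M_s) ≤ max{k+7, s}.) -/

import Mathlib

open Finset

section Pfx

variable {m n : ℕ}

/-- The set of the first `j` values of an embedding. -/
def pfx (u : Fin m ↪ Fin n) (j : ℕ) : Finset (Fin n) :=
  Finset.univ.filter (fun x => ∃ i : Fin m, u i = x ∧ (i : ℕ) < j)

lemma pfx_mono (u : Fin m ↪ Fin n) {j j' : ℕ} (h : j ≤ j') : pfx u j ⊆ pfx u j' := by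
  intro x hx
  simp only [pfx, mem_filter, mem_univ, true_and] at hx ⊢
  obtain ⟨i, hi, hij⟩ := hx
  exact ⟨i, hi, lt_of_lt_of_le hij h⟩

lemma filter_lt_card {j : ℕ} (h : j ≤ m) :
    (Finset.univ.filter (fun i : Fin m => (i : ℕ) < j)).card = j := by
  have : (Finset.univ.filter (fun i : Fin m => (i : ℕ) < j)) =
      Finset.univ.image (Fin.castLE h) := by
    ext i
    simp only [mem_filter, mem_univ, true_and, mem_image]
    constructor
    · intro hi; exact ⟨⟨(i : ℕ), hi⟩, by ext; simp⟩
    · rintro ⟨a, rfl⟩; exact a.2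
  rw [this, Finset.card_image_of_injective _ (Fin.castLE_injective h), card_univ,
    Fintype.card_fin]

lemma pfx_eq_image (u : Fin m ↪ Fin n) (j : ℕ) :
    pfx u j = (Finset.univ.filter (fun i : Fin m => (i : ℕ) < j)).image u := by
  ext x
  simp only [pfx, mem_filter, mem_univ, true_and, mem_image]
  constructor
  · rintro ⟨i, rfl, hij⟩
    exact ⟨i, hij, rfl⟩
  · rintro ⟨i, hi, rfl⟩
    exact ⟨i, rfl, hi⟩

lemma pfx_card (u : Fin m ↪ Fin n) {j : ℕ} (h : j ≤ m) : (pfx u j).card = j := by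
  rw [pfx_eq_image, Finset.card_image_of_injective _ u.injective, filter_lt_card h]

lemma pfx_trans (u : Fin m ↪ Fin n) (π : Equiv.Perm (Fin n)) (j : ℕ) :
    pfx (u.trans π.toEmbedding) j = (pfx u j).image π := by
  rw [pfx_eq_image, pfx_eq_image, Finset.image_image]
  rfl

/-- A permutation mapping `X` onto `X'`. -/
lemma exists_perm_mem_iff (X X' : Finset (Fin n)) (h : X.card = X'.card) :
    ∃ π : Equiv.Perm (Fin n), ∀ x, x ∈ X ↔ π x ∈ X' := by
  have hc : Xᶜ.card = X'ᶜ.card := by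
    rw [Finset.card_compl, Finset.card_compl, h]
  let e₁ : {x // x ∈ X} ≃ {x // x ∈ X'} := Finset.equivOfCardEq h
  let e₂' : ↥(Xᶜ) ≃ ↥(X'ᶜ) := Finset.equivOfCardEq hc
  let e₂ : {x // ¬ x ∈ X} ≃ {x // ¬ x ∈ X'} :=
    ((Equiv.subtypeEquivRight (fun x => by simp)).trans e₂').trans
      (Equiv.subtypeEquivRight (fun x => by simp))
  refine ⟨Equiv.subtypeCongr e₁ e₂, fun x => ?_⟩
  by_cases hx : x ∈ X
  · simp only [Equiv.subtypeCongr, Equiv.trans_apply,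
      Equiv.sumCompl_symm_apply_of_pos hx, Equiv.sumCongr_apply, Sum.map_inl,
      Equiv.sumCompl_apply_inl]
    exact ⟨fun _ => (e₁ ⟨x, hx⟩).2, fun _ => hx⟩
  · simp only [Equiv.subtypeCongr, Equiv.trans_apply,
      Equiv.sumCompl_symm_apply_of_neg hx, Equiv.sumCongr_apply, Sum.map_inr,
      Equiv.sumCompl_apply_inr]
    exact ⟨fun hxx => absurd hxx hx, fun hxx => absurd ((e₂ ⟨x, hx⟩).2) (not_not.mpr hxx)⟩

lemma image_perm_eq (X X' : Finset (Fin n)) (π : Equiv.Perm (Fin n))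
    (hiff : ∀ x, x ∈ X ↔ π x ∈ X') (h : X.card = X'.card) : X.image π = X' := by
  apply Finset.eq_of_subset_of_card_le
  · intro y hy
    simp only [mem_image] at hy
    obtain ⟨x, hx, rfl⟩ := hy
    exact (hiff x).mp hx
  · rw [Finset.card_image_of_injective _ π.injective, h]

lemma fib_card_eq (i : ℕ) (X X' : Finset (Fin n)) (hX : X.card = i) (hX' : X'.card = i) :
    (Finset.univ.filter (fun u : Fin m ↪ Fin n => pfx u i = X)).card =
    (Finset.univ.filter (fun u : Fin m ↪ Fin n => pfx u i = X')).card := by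
  obtain ⟨π, hπ⟩ := exists_perm_mem_iff X X' (hX.trans hX'.symm)
  have hπ' : ∀ x, x ∈ X' ↔ π.symm x ∈ X := by
    intro x
    constructor
    · intro hx
      rw [hπ (π.symm x), Equiv.apply_symm_apply]; exact hx
    · intro hx
      have := (hπ (π.symm x)).mp hx
      rwa [Equiv.apply_symm_apply] at this
  refine Finset.card_bij' (fun u _ => u.trans π.toEmbedding)
    (fun u _ => u.trans π.symm.toEmbedding) ?_ ?_ ?_ ?_
  · intro u hu
    simp only [mem_filter, mem_univ, true_and] at hu ⊢
    rw [pfx_trans, hu]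
    exact image_perm_eq X X' π hπ (hX.trans hX'.symm)
  · intro u hu
    simp only [mem_filter, mem_univ, true_and] at hu ⊢
    rw [pfx_trans, hu]
    exact image_perm_eq X' X π.symm hπ' (hX'.trans hX.symm)
  · intro u _
    ext x
    simp
  · intro u _
    ext x
    simp

lemma fib_mul_total (i : ℕ) (him : i ≤ m) (X : Finset (Fin n)) (hX : X.card = i) :
    (Finset.univ.filter (fun u : Fin m ↪ Fin n => pfx u i = X)).card * n.choose i =
      Fintype.card (Fin m ↪ Fin n) := by
  have hpart : (Finset.univ : Finset (Fin m ↪ Fin n)).card =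
      ∑ Y ∈ Finset.powersetCard i (Finset.univ : Finset (Fin n)),
        (Finset.univ.filter (fun u : Fin m ↪ Fin n => pfx u i = Y)).card := by
    apply Finset.card_eq_sum_card_fiberwise
    intro u _
    rw [Finset.mem_coe, Finset.mem_powersetCard]
    exact ⟨Finset.subset_univ _, pfx_card u him⟩
  have hconst : ∀ Y ∈ Finset.powersetCard i (Finset.univ : Finset (Fin n)),
      (Finset.univ.filter (fun u : Fin m ↪ Fin n => pfx u i = Y)).card =
      (Finset.univ.filter (fun u : Fin m ↪ Fin n => pfx u i = X)).card := by
    intro Y hY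
    rw [Finset.mem_powersetCard] at hY
    exact fib_card_eq i Y X hY.2 hX
  rw [Finset.sum_congr rfl hconst, Finset.sum_const, smul_eq_mul,
    Finset.card_powersetCard] at hpart
  simp only [Finset.card_univ, Fintype.card_fin] at hpart
  rw [Nat.mul_comm]
  exact hpart.symm

end Pfx

lemma choose_mono_half (n : ℕ) : ∀ j r : ℕ, r ≤ j → 2 * j ≤ n → n.choose r ≤ n.choose j := by
  intro j
  induction j with
  | zero =>
    intro r hr _
    have : r = 0 := Nat.le_zero.mp hr
    subst this
    exact le_rfl
  | succ j ih =>
    intro r hr h2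
    rcases Nat.eq_or_lt_of_le hr with rfl | hlt
    · exact le_rfl
    · have hr' : r ≤ j := by omega
      refine le_trans (ih r hr' (by omega)) ?_
      apply Nat.choose_le_succ_of_lt_half_left
      omega

lemma choose_mono_mid (n r j : ℕ) (hrj : r ≤ j) (hj : j + r ≤ n) :
    n.choose r ≤ n.choose j := by
  rcases le_or_gt (2 * j) n with h | h
  · exact choose_mono_half n j r hrj h
  · have hjn : j ≤ n := by omega
    have heq : n.choose (n - j) = n.choose j := Nat.choose_symm hjn
    rw [← heq]
    exact choose_mono_half n (n - j) r (by omega) (by omega)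

lemma chainAvoid (k n : ℕ) (h6 : k + 6 ≤ n) (W : Finset (Finset (Fin n)))
    (hW : W.card < n.choose 3) :
    ∃ u : Fin (k + 3) ↪ Fin n, ∀ j ≤ k, pfx u (3 + j) ∉ W := by
  classical
  set m := k + 3 with hm
  set H : Finset (Fin m ↪ Fin n) :=
    Finset.univ.filter (fun u => ∃ j : Fin (k + 1), pfx u (3 + (j : ℕ)) ∈ W) with hH
  set T : ℕ := Fintype.card (Fin m ↪ Fin n) with hT
  have hTpos : 0 < T := by
    have hmn : m ≤ n := by omega
    have : Nonempty (Fin m ↪ Fin n) := ⟨⟨Fin.castLE hmn, Fin.castLE_injective hmn⟩⟩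
    rw [hT]
    exact Fintype.card_pos
  have hBX : ∀ X ∈ W,
      (Finset.univ.filter (fun u : Fin m ↪ Fin n =>
        ∃ j : Fin (k + 1), pfx u (3 + (j : ℕ)) = X)).card * n.choose 3 ≤ T := by
    intro X _
    by_cases hcard : 3 ≤ X.card ∧ X.card ≤ k + 3
    · have hsub : (Finset.univ.filter (fun u : Fin m ↪ Fin n =>
          ∃ j : Fin (k + 1), pfx u (3 + (j : ℕ)) = X)) ⊆
          (Finset.univ.filter (fun u : Fin m ↪ Fin n => pfx u X.card = X)) := by
        intro u hu
        simp only [mem_filter, mem_univ, true_and] at hu ⊢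
        obtain ⟨j, hj⟩ := hu
        have hxc : X.card = 3 + (j : ℕ) := by
          rw [← hj]; exact pfx_card u (by omega)
        rw [hxc]; exact hj
      calc (Finset.univ.filter (fun u : Fin m ↪ Fin n =>
          ∃ j : Fin (k + 1), pfx u (3 + (j : ℕ)) = X)).card * n.choose 3
          ≤ (Finset.univ.filter (fun u : Fin m ↪ Fin n =>
              pfx u X.card = X)).card * n.choose X.card := by
            apply Nat.mul_le_mul (Finset.card_le_card hsub)
            exact choose_mono_mid n 3 X.card hcard.1 (by omega)
        _ = T := fib_mul_total X.card (by omega) X rfl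
    · have hempty : (Finset.univ.filter (fun u : Fin m ↪ Fin n =>
          ∃ j : Fin (k + 1), pfx u (3 + (j : ℕ)) = X)) = ∅ := by
        rw [Finset.filter_eq_empty_iff]
        intro u _
        rintro ⟨j, hj⟩
        have hxc : X.card = 3 + (j : ℕ) := by
          rw [← hj]; exact pfx_card u (by omega)
        have hjk : (j : ℕ) ≤ k := by omega
        exact hcard ⟨by omega, by omega⟩
      rw [hempty]
      simp
  have hHsub : H ⊆ W.biUnion (fun X => Finset.univ.filter (fun u : Fin m ↪ Fin n =>
      ∃ j : Fin (k + 1), pfx u (3 + (j : ℕ)) = X)) := by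
    intro u hu
    rw [hH, mem_filter] at hu
    obtain ⟨_, j, hj⟩ := hu
    rw [Finset.mem_biUnion]
    exact ⟨pfx u (3 + (j : ℕ)), hj, Finset.mem_filter.mpr ⟨mem_univ _, ⟨j, rfl⟩⟩⟩
  have hHcard : H.card * n.choose 3 < T * n.choose 3 := by
    calc H.card * n.choose 3
        ≤ (∑ X ∈ W, (Finset.univ.filter (fun u : Fin m ↪ Fin n =>
            ∃ j : Fin (k + 1), pfx u (3 + (j : ℕ)) = X)).card) * n.choose 3 := by
          apply Nat.mul_le_mul_right
          exact le_trans (Finset.card_le_card hHsub) Finset.card_biUnion_le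
      _ = ∑ X ∈ W, (Finset.univ.filter (fun u : Fin m ↪ Fin n =>
            ∃ j : Fin (k + 1), pfx u (3 + (j : ℕ)) = X)).card * n.choose 3 := by
          rw [Finset.sum_mul]
      _ ≤ ∑ _X ∈ W, T := Finset.sum_le_sum hBX
      _ = W.card * T := by rw [Finset.sum_const, smul_eq_mul]
      _ < n.choose 3 * T := (Nat.mul_lt_mul_right hTpos).mpr hW
      _ = T * n.choose 3 := Nat.mul_comm _ _
  have hHlt : H.card < T := Nat.lt_of_mul_lt_mul_right hHcard
  have hex : ∃ u : Fin m ↪ Fin n, u ∉ H := by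
    by_contra hcon
    push_neg at hcon
    have hsub2 : (Finset.univ : Finset (Fin m ↪ Fin n)) ⊆ H := fun u _ => hcon u
    have := Finset.card_le_card hsub2
    rw [card_univ] at this
    omega
  obtain ⟨u, hu⟩ := hex
  refine ⟨u, fun j hj hmem => ?_⟩
  apply hu
  rw [hH, mem_filter]
  exact ⟨mem_univ _, ⟨⟨j, by omega⟩, hmem⟩⟩

lemma inj_snoc {β : Type*} {t : ℕ} (f : Fin t ⊕ Fin t → β) (hf : Function.Injective f)
    (A B : β) (hA : ∀ x, f x ≠ A) (hB : ∀ x, f x ≠ B) (hAB : A ≠ B) :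
    Function.Injective (Sum.elim (Fin.snoc (f ∘ Sum.inl) A) (Fin.snoc (f ∘ Sum.inr) B) :
      Fin (t + 1) ⊕ Fin (t + 1) → β) := by
  intro x y h
  rcases x with i | i <;> rcases y with j | j <;>
    rcases Fin.eq_castSucc_or_eq_last i with ⟨i', rfl⟩ | rfl <;>
    rcases Fin.eq_castSucc_or_eq_last j with ⟨j', rfl⟩ | rfl <;>
    simp only [Sum.elim_inl, Sum.elim_inr, Fin.snoc_castSucc, Fin.snoc_last,
      Function.comp_apply] at h <;>
  first
  | rfl
  | (exact absurd h (hA _))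
  | (exact absurd h.symm (hA _))
  | (exact absurd h (hB _))
  | (exact absurd h.symm (hB _))
  | (exact absurd h hAB)
  | (exact absurd h hAB.symm)
  | (have h2 := hf h; simp_all)

lemma cover {n : ℕ} (t : ℕ) (F : Finset (Finset (Fin n)))
    (hno : ¬ ∃ f : Fin (t + 1) ⊕ Fin (t + 1) → Finset (Fin n),
      Function.Injective f ∧ (∀ x, f x ∈ F) ∧ ∀ i, f (Sum.inl i) ⊆ f (Sum.inr i)) :
    ∃ W : Finset (Finset (Fin n)), W.card ≤ 2 * t ∧
      ∀ A ∈ F, ∀ B ∈ F, A ⊆ B → A ≠ B → A ∈ W ∨ B ∈ W := by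
  induction t generalizing F with
  | zero =>
    refine ⟨∅, by simp, fun A hA B hB hAB hne => ?_⟩
    exfalso
    apply hno
    refine ⟨Sum.elim (fun _ => A) (fun _ => B), ?_, ?_, ?_⟩
    · intro x y h
      rcases x with i | i <;> rcases y with j | j <;>
        simp only [Sum.elim_inl, Sum.elim_inr] at h
      · exact congrArg Sum.inl (Fin.ext (by omega))
      · exact absurd h hne
      · exact absurd h.symm hne
      · exact congrArg Sum.inr (Fin.ext (by omega))
    · rintro (i | i)
      · exact hA
      · exact hB
    · intro i
      exact hAB
  | succ t ih =>
    by_cases hp : ∃ A ∈ F, ∃ B ∈ F, A ⊆ B ∧ A ≠ B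
    · obtain ⟨A, hA, B, hB, hAB, hne⟩ := hp
      set F' := (F.erase A).erase B with hF'
      have hF'sub : F' ⊆ F := Finset.Subset.trans (Finset.erase_subset _ _)
        (Finset.erase_subset _ _)
      have hF'ne : ∀ X ∈ F', X ≠ A ∧ X ≠ B := by
        intro X hX
        rw [hF', Finset.mem_erase, Finset.mem_erase] at hX
        exact ⟨hX.2.1, hX.1⟩
      have hno' : ¬ ∃ f : Fin (t + 1) ⊕ Fin (t + 1) → Finset (Fin n),
          Function.Injective f ∧ (∀ x, f x ∈ F') ∧ ∀ i, f (Sum.inl i) ⊆ f (Sum.inr i) := by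
        rintro ⟨f, hf, hmem, hincl⟩
        apply hno
        refine ⟨Sum.elim (Fin.snoc (f ∘ Sum.inl) A) (Fin.snoc (f ∘ Sum.inr) B), ?_, ?_, ?_⟩
        · exact inj_snoc f hf A B (fun x => (hF'ne _ (hmem x)).1)
            (fun x => (hF'ne _ (hmem x)).2) hne
        · rintro (i | i) <;>
            rcases Fin.eq_castSucc_or_eq_last i with ⟨i', rfl⟩ | rfl <;>
            simp only [Sum.elim_inl, Sum.elim_inr, Fin.snoc_castSucc, Fin.snoc_last,
              Function.comp_apply]
          · exact hF'sub (hmem _)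
          · exact hA
          · exact hF'sub (hmem _)
          · exact hB
        · intro i
          rcases Fin.eq_castSucc_or_eq_last i with ⟨i', rfl⟩ | rfl <;>
            simp only [Sum.elim_inl, Sum.elim_inr, Fin.snoc_castSucc, Fin.snoc_last,
              Function.comp_apply]
          · exact hincl i'
          · exact hAB
      obtain ⟨W', hW'card, hW'cov⟩ := ih F' hno'
      refine ⟨insert A (insert B W'), ?_, ?_⟩
      · have h1 := Finset.card_insert_le A (insert B W')
        have h2 := Finset.card_insert_le B W'
        omega
      · intro C hC D hD hsub hneq
        by_cases hCA : C = A
        · exact Or.inl (by rw [hCA]; exact Finset.mem_insert_self _ _)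
        by_cases hCB : C = B
        · exact Or.inl (by rw [hCB]; exact Finset.mem_insert_of_mem (Finset.mem_insert_self _ _))
        by_cases hDA : D = A
        · exact Or.inr (by rw [hDA]; exact Finset.mem_insert_self _ _)
        by_cases hDB : D = B
        · exact Or.inr (by rw [hDB]; exact Finset.mem_insert_of_mem (Finset.mem_insert_self _ _))
        have hC' : C ∈ F' := by
          rw [hF', Finset.mem_erase, Finset.mem_erase]
          exact ⟨hCB, hCA, hC⟩
        have hD' : D ∈ F' := by
          rw [hF', Finset.mem_erase, Finset.mem_erase]
          exact ⟨hDB, hDA, hD⟩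
        rcases hW'cov C hC' D hD' hsub hneq with h | h
        · exact Or.inl (Finset.mem_insert_of_mem (Finset.mem_insert_of_mem h))
        · exact Or.inr (Finset.mem_insert_of_mem (Finset.mem_insert_of_mem h))
    · push_neg at hp
      exact ⟨∅, by simp, fun A hA B hB hsub hne => absurd (hp A hA B hB hsub) hne⟩

lemma arith_bound (k t : ℕ) (hk : 2 ≤ k) (ht : 2 ≤ t) :
    k * (2 * t) < (max (k + 7) (t + 1)).choose 3 := by
  set N := max (k + 7) (t + 1) with hN
  have h1 : k + 7 ≤ N := le_max_left _ _
  have h2 : t + 1 ≤ N := le_max_right _ _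
  have hd : N.descFactorial 3 = 6 * N.choose 3 := by
    rw [Nat.descFactorial_eq_factorial_mul_choose]
    norm_num [Nat.factorial]
  have hdf : N.descFactorial 3 = (N - 2) * ((N - 1) * (N * 1)) := by
    simp [Nat.descFactorial]
  have h9 : 9 ≤ N := by omega
  obtain ⟨b, hb⟩ : ∃ b, N = b + 9 := ⟨N - 9, by omega⟩
  have hkb : k ≤ b + 2 := by omega
  have htb : t ≤ b + 8 := by omega
  have key : 6 * (k * (2 * t)) < N.descFactorial 3 := by
    rw [hdf, hb]
    have hsub1 : b + 9 - 2 = b + 7 := by omega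
    have hsub2 : b + 9 - 1 = b + 8 := by omega
    rw [hsub1, hsub2]
    nlinarith [sq_nonneg b, Nat.zero_le b]
  omega

theorem stmt5 (k s : ℕ) (hk : 2 ≤ k) (hs : 3 ≤ s)
    (χ : Finset (Fin (max (k + 7) s)) → Fin k) :
    ∃ f : Fin s ⊕ Fin s → Finset (Fin (max (k + 7) s)),
      Function.Injective f ∧ (∃ c : Fin k, ∀ x, χ (f x) = c) ∧
      ∀ i : Fin s, f (Sum.inl i) ⊆ f (Sum.inr i) := by
  by_contra hcon
  obtain ⟨t, rfl⟩ : ∃ t, s = t + 1 := ⟨s - 1, by omega⟩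
  have ht : 2 ≤ t := by omega
  have hN7 : k + 7 ≤ max (k + 7) (t + 1) := le_max_left _ _
  -- covers for each color
  have hcov : ∀ c : Fin k, ∃ W : Finset (Finset (Fin (max (k + 7) (t + 1)))), W.card ≤ 2 * t ∧
      ∀ A ∈ Finset.univ.filter (fun X => χ X = c),
        ∀ B ∈ Finset.univ.filter (fun X => χ X = c), A ⊆ B → A ≠ B → A ∈ W ∨ B ∈ W := by
    intro c
    apply cover
    rintro ⟨f, hf, hmem, hincl⟩
    exact hcon ⟨f, hf, ⟨c, fun x => (Finset.mem_filter.mp (hmem x)).2⟩, hincl⟩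
  choose Wc hWcard hWcov using hcov
  classical
  set W : Finset (Finset (Fin (max (k + 7) (t + 1)))) := Finset.univ.biUnion Wc with hW
  have hWtot : W.card ≤ k * (2 * t) := by
    refine le_trans Finset.card_biUnion_le ?_
    refine le_trans (Finset.sum_le_card_nsmul Finset.univ _ (2 * t)
      (fun c _ => hWcard c)) ?_
    simp [Finset.card_univ, Nat.smul_one_eq_cast]
  have hWlt : W.card < (max (k + 7) (t + 1)).choose 3 := lt_of_le_of_lt hWtot (arith_bound k t hk ht)
  obtain ⟨u, hu⟩ := chainAvoid k (max (k + 7) (t + 1)) (le_trans (by omega) hN7) W hWlt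
  -- pigeonhole on the k+1 chain sets
  have hcard : Fintype.card (Fin k) < Fintype.card (Fin (k + 1)) := by simp
  obtain ⟨a, b, hab, hcolor⟩ :=
    Fintype.exists_ne_map_eq_of_card_lt (fun j : Fin (k + 1) => χ (pfx u (3 + (j : ℕ)))) hcard
  -- wlog a < b
  have main : ∀ a b : Fin (k + 1), (a : ℕ) < (b : ℕ) →
      χ (pfx u (3 + (a : ℕ))) = χ (pfx u (3 + (b : ℕ))) → False := by
    intro a b hlt hcol
    set A := pfx u (3 + (a : ℕ)) with hA
    set B := pfx u (3 + (b : ℕ)) with hB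
    have hsub : A ⊆ B := pfx_mono u (by omega)
    have hcA : A.card = 3 + (a : ℕ) := pfx_card u (by omega)
    have hcB : B.card = 3 + (b : ℕ) := pfx_card u (by omega)
    have hne : A ≠ B := fun h => by rw [h] at hcA; omega
    set c := χ A with hc
    have hmemA : A ∈ Finset.univ.filter (fun X => χ X = c) :=
      Finset.mem_filter.mpr ⟨Finset.mem_univ _, rfl⟩
    have hmemB : B ∈ Finset.univ.filter (fun X => χ X = c) :=
      Finset.mem_filter.mpr ⟨Finset.mem_univ _, hcol.symm⟩
    have hWc : Wc c ⊆ W := Finset.subset_biUnion_of_mem Wc (Finset.mem_univ c)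
    rcases hWcov c A hmemA B hmemB hsub hne with h | h
    · exact hu (a : ℕ) (by omega) (hWc h)
    · exact hu (b : ℕ) (by omega) (hWc h)
  rcases Nat.lt_or_ge (a : ℕ) (b : ℕ) with h | h
  · exact main a b h hcolor
  · have hlt : (b : ℕ) < (a : ℕ) := by
      rcases Nat.lt_or_ge (b : ℕ) (a : ℕ) with h' | h'
      · exact h'
      · exact absurd (Fin.ext (le_antisymm h' h)) hab
    exact main b a hlt hcolor.symm
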